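/- Let R be a commutative local ring with m = (2) ≠ 0, m² = 0, and suppose the category F(R) of finitely generated free R-modules carries a triangulated structure with identity translation functor in which R →2 R →2 R →2 R is an exact triangle. Then F(R) admits no nontrivial exact functor to or from the stable homotopy category (or any topological triangulated category): every such exact functor sends every object to a zero object. -/

import Mathlib

open CategoryTheory Limits Pretriangulated

/-- The category of finitely generated free `R`-modules. -/
abbrev FGFree (R : Type*) [CommRing R] :=
  CategoryTheory.ObjectProperty.FullSubcategory (fun M : ModuleCat R => Module.Free R M ∧ Module.Finite R M)

/-- `R` as an object of `FGFree R`. -/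
abbrev FGFree.R (R : Type*) [CommRing R] : FGFree R :=
  ⟨ModuleCat.of R R, inferInstanceAs (Module.Free R R), inferInstanceAs (Module.Finite R R)⟩

/-- A Hopf map for `A`: a morphism `η : ΣA ⟶ A` with `2η = 0` such that for some exact
triangle `A →2 A →i C →q ΣA` one has `iηq = 2·1_C`. -/
def IsHopfMap {T : Type*} [Category T] [Preadditive T] [HasZeroObject T]
    [HasShift T ℤ] [∀ n : ℤ, (shiftFunctor T n).Additive] [Pretriangulated T]
    (A : T) (η : A⟦(1 : ℤ)⟧ ⟶ A) : Prop :=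
  (2 : ℤ) • η = 0 ∧
  ∃ (Cone : T) (i : A ⟶ Cone) (q : Cone ⟶ A⟦(1 : ℤ)⟧),
    Triangle.mk ((2 : ℤ) • 𝟙 A) i q ∈ (distTriang T) ∧
      q ≫ η ≫ i = (2 : ℤ) • 𝟙 Cone

section Aux

variable {C : Type*} [Category C] [Preadditive C] [HasZeroObject C]
    [HasShift C ℤ] [∀ n : ℤ, (shiftFunctor C n).Additive] [Pretriangulated C]

/-- An object is exotic if it carries a distinguished triangle `X →2 X →2 X →2s ΣX`. -/
def IsExoticObj (X : C) : Prop :=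
  ∃ s : X ⟶ X⟦(1 : ℤ)⟧,
    Triangle.mk ((2 : ℤ) • 𝟙 X) ((2 : ℤ) • 𝟙 X) ((2 : ℤ) • s) ∈ distTriang C

lemma IsExoticObj.of_iso {X Y : C} (h : IsExoticObj X) (φ : X ≅ Y) : IsExoticObj Y := by
  obtain ⟨s, hs⟩ := h
  refine ⟨φ.inv ≫ s ≫ φ.hom⟦(1 : ℤ)⟧', isomorphic_distinguished _ hs _ ?_⟩
  refine Triangle.isoMk _ _ φ.symm φ.symm φ.symm ?_ ?_ ?_
  · simp [Triangle.mk, Preadditive.zsmul_comp, Preadditive.comp_zsmul]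
  · simp [Triangle.mk, Preadditive.zsmul_comp, Preadditive.comp_zsmul]
  · simp only [Triangle.mk, Iso.symm_hom, Triangle.mk_obj₁, Triangle.mk_mor₃, Preadditive.zsmul_comp,
      Preadditive.comp_zsmul, Category.assoc, ← Functor.map_comp, φ.hom_inv_id,
      Functor.map_id, Category.comp_id]
    simp

variable {D : Type*} [Category D] [Preadditive D] [HasZeroObject D]
    [HasShift D ℤ] [∀ n : ℤ, (shiftFunctor D n).Additive] [Pretriangulated D]

lemma IsExoticObj.map {X : C} (h : IsExoticObj X) (F : C ⥤ D) [F.CommShift ℤ]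
    [F.IsTriangulated] : IsExoticObj (F.obj X) := by
  obtain ⟨s, hs⟩ := h
  refine ⟨F.map s ≫ (F.commShiftIso (1 : ℤ)).hom.app X,
    isomorphic_distinguished _ (F.map_distinguished _ hs) _ ?_⟩
  refine Triangle.isoMk _ _ (Iso.refl _) (Iso.refl _) (Iso.refl _) ?_ ?_ ?_ <;>
    simp [Triangle.mk, Functor.mapTriangle, Preadditive.zsmul_comp, Preadditive.comp_zsmul]

lemma IsHopfMap.map {Y : C} {η : Y⟦(1 : ℤ)⟧ ⟶ Y} (h : IsHopfMap Y η) (G : C ⥤ D)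
    [G.CommShift ℤ] [G.IsTriangulated] :
    IsHopfMap (G.obj Y) ((G.commShiftIso (1 : ℤ)).inv.app Y ≫ G.map η) := by
  obtain ⟨h2, Cn, i, q, hT, hrel⟩ := h
  refine ⟨?_, G.obj Cn, G.map i, G.map q ≫ (G.commShiftIso (1 : ℤ)).hom.app Y, ?_, ?_⟩
  · rw [← Preadditive.comp_zsmul, ← Functor.map_zsmul, h2, Functor.map_zero, comp_zero]
  · refine isomorphic_distinguished _ (G.map_distinguished _ hT) _ ?_
    refine Triangle.isoMk _ _ (Iso.refl _) (Iso.refl _) (Iso.refl _) ?_ ?_ ?_ <;> simp [Triangle.mk, Functor.mapTriangle]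
  · simp only [Category.assoc, Iso.hom_inv_id_app_assoc]
    rw [← G.map_comp, ← G.map_comp, hrel, Functor.map_zsmul, CategoryTheory.Functor.map_id]

lemma isZero_of_exotic_of_hopf {X : C} (hX : IsExoticObj X) (η : X⟦(1 : ℤ)⟧ ⟶ X)
    (hη : IsHopfMap X η) : IsZero X := by
  obtain ⟨s, hs⟩ := hX
  obtain ⟨h2, Cn, i, q, hT, hrel⟩ := hη
  obtain ⟨c, hc1, hc2⟩ : ∃ c : Cn ⟶ X, i ≫ c = 𝟙 X ≫ ((2 : ℤ) • 𝟙 X) ∧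
      q ≫ (𝟙 X)⟦(1 : ℤ)⟧' = c ≫ ((2 : ℤ) • s) :=
    complete_distinguished_triangle_morphism _ _ hT hs (𝟙 X) (𝟙 X) (by simp [Triangle.mk])
  haveI : IsIso c := isIso₃_of_isIso₁₂
    { hom₁ := 𝟙 X, hom₂ := 𝟙 X, hom₃ := c, comm₁ := by simp [Triangle.mk], comm₂ := hc1,
      comm₃ := hc2 } hT hs (by dsimp; exact IsIso.id _) (by dsimp; exact IsIso.id _)
  have e1 : q = (2 : ℤ) • (c ≫ s) := by
    rw [CategoryTheory.Functor.map_id, Category.comp_id] at hc2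
    rw [hc2, Preadditive.comp_zsmul]
  have e2 : i ≫ c = (2 : ℤ) • 𝟙 X := by simpa using hc1
  have h4 : (2 : ℤ) • (𝟙 X) = 0 := by
    have : (2 : ℤ) • (s ≫ η) = 0 := by rw [← Preadditive.comp_zsmul, h2, comp_zero]
    calc (2 : ℤ) • (𝟙 X) = inv c ≫ ((2 : ℤ) • 𝟙 Cn) ≫ c := by simp
      _ = inv c ≫ (q ≫ η ≫ i) ≫ c := by rw [hrel]
      _ = (2 : ℤ) • (s ≫ η ≫ (i ≫ c)) := by
          rw [e1]
          simp [Preadditive.zsmul_comp, Preadditive.comp_zsmul]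
      _ = (2 : ℤ) • ((2 : ℤ) • (s ≫ η)) := by
          rw [e2]
          simp [Preadditive.comp_zsmul]
      _ = 0 := by rw [this, smul_zero]
  obtain ⟨g, hg⟩ := Triangle.coyoneda_exact₂ _ hs (𝟙 X) (by simp [h4, Triangle.mk]; rfl)
  rw [IsZero.iff_id_eq_zero, hg]
  simp [h4]
  exact comp_zero

end Aux


section FG
universe u v
variable {R : Type u} [CommRing R]

def FGFree.piObj (ι : Type v) [Finite ι] (A : FGFree.{u, v} R) : FGFree.{u, v} R :=
  ⟨ModuleCat.of R (ι → A.obj),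
    letI := A.property.1
    letI := A.property.2
    ⟨inferInstanceAs (Module.Free R (ι → A.obj)), inferInstanceAs (Module.Finite R (ι → A.obj))⟩⟩

def FGFree.piFan (ι : Type v) [Finite ι] (A : FGFree.{u, v} R) : Fan (fun _ : ι => A) :=
  Fan.mk (FGFree.piObj ι A) (fun i => ObjectProperty.homMk (ModuleCat.ofHom (LinearMap.proj i : (ι → A.obj) →ₗ[R] A.obj)))

def FGFree.piFanIsLimit (ι : Type v) [Finite ι] (A : FGFree.{u, v} R) :
    IsLimit (FGFree.piFan ι A) :=
  mkFanLimit _ (fun s => ObjectProperty.homMk (ModuleCat.ofHom (LinearMap.pi (fun i => (s.proj i).hom.hom))))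
    (fun _ _ => rfl)
    (fun _ m hm => InducedCategory.hom_ext (ModuleCat.hom_ext (LinearMap.ext fun x => funext fun i =>
      LinearMap.congr_fun (congrArg (fun f => f.hom.hom) (hm i)) x)))

lemma FGFree.hasProductConst (ι : Type v) [Finite ι] (A : FGFree.{u, v} R) :
    HasProduct (fun _ : ι => A) :=
  HasLimit.mk ⟨_, FGFree.piFanIsLimit ι A⟩

/-- An iso in `FGFree R` from a linear equivalence of underlying modules. -/
def FGFree.isoOfLinearEquiv {X Y : FGFree R} (f : X.obj ≃ₗ[R] Y.obj) : X ≅ Y where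
  hom := ObjectProperty.homMk (ModuleCat.ofHom (f.toLinearMap : X.obj →ₗ[R] Y.obj))
  inv := ObjectProperty.homMk (ModuleCat.ofHom (f.symm.toLinearMap : Y.obj →ₗ[R] X.obj))
  hom_inv_id := InducedCategory.hom_ext (ModuleCat.hom_ext (LinearMap.ext fun x => f.symm_apply_apply x))
  inv_hom_id := InducedCategory.hom_ext (ModuleCat.hom_ext (LinearMap.ext fun x => f.apply_symm_apply x))

lemma FGFree.isExotic_all
    [HasZeroObject (FGFree R)] [HasShift (FGFree R) ℤ]
    [∀ n : ℤ, (shiftFunctor (FGFree R) n).Additive] [Pretriangulated (FGFree R)]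
    (e : shiftFunctor (FGFree R) (1 : ℤ) ≅ 𝟭 (FGFree R))
    (hR : Triangle.mk ((2 : ℤ) • 𝟙 (FGFree.R R)) ((2 : ℤ) • 𝟙 (FGFree.R R))
        (((2 : ℤ) • 𝟙 (FGFree.R R)) ≫ e.inv.app (FGFree.R R)) ∈ distTriang (FGFree R))
    (X : FGFree R) : IsExoticObj X := by
  have hTR : Triangle.mk ((2 : ℤ) • 𝟙 (FGFree.R R)) ((2 : ℤ) • 𝟙 (FGFree.R R))
      ((2 : ℤ) • e.inv.app (FGFree.R R)) ∈ distTriang (FGFree R) := by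
    have h : ((2 : ℤ) • 𝟙 (FGFree.R R)) ≫ e.inv.app (FGFree.R R)
        = (2 : ℤ) • e.inv.app (FGFree.R R) := by
      rw [Preadditive.zsmul_comp, Category.id_comp]
    rwa [h] at hR
  haveI : Module.Free R X.obj := X.property.1
  haveI : Module.Finite R X.obj := X.property.2
  set ι := Module.Free.ChooseBasisIndex R X.obj with hι
  haveI h1 : HasProduct (fun _ : ι => FGFree.R R) := FGFree.hasProductConst ι _
  haveI h2 : HasProduct (fun _ : ι => (FGFree.R R)⟦(1 : ℤ)⟧) := FGFree.hasProductConst ι _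
  have hprod := productTriangle_distinguished
    (fun _ : ι => Triangle.mk' (FGFree.R R) (FGFree.R R) (FGFree.R R) ((2 : ℤ) • 𝟙 (FGFree.R R)) ((2 : ℤ) • 𝟙 (FGFree.R R))
      ((2 : ℤ) • e.inv.app (FGFree.R R))) (fun _ => hTR)
  have hQ : IsExoticObj (∏ᶜ (fun _ : ι => FGFree.R R)) := by
    refine ⟨Limits.Pi.map (fun _ : ι => e.inv.app (FGFree.R R)) ≫
      inv (piComparison (shiftFunctor (FGFree R) (1 : ℤ)) (fun _ : ι => FGFree.R R)), ?_⟩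
    refine isomorphic_distinguished _ hprod _ ?_
    refine Triangle.isoMk _ _ (Iso.refl _) (Iso.refl _) (Iso.refl _) ?_ ?_ ?_
    · refine Eq.trans (Category.comp_id _) ?_ |>.trans (Category.id_comp _).symm
      apply limit.hom_ext
      intro j
      simp [Triangle.mk, productTriangle, Limits.Pi.map, Preadditive.zsmul_comp, Preadditive.comp_zsmul]
    · refine Eq.trans (Category.comp_id _) ?_ |>.trans (Category.id_comp _).symm
      apply limit.hom_ext
      intro j
      simp [Triangle.mk, productTriangle, Limits.Pi.map, Preadditive.zsmul_comp, Preadditive.comp_zsmul]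
    · refine Eq.trans ?_ (Category.id_comp _).symm
      simp only [Triangle.mk, productTriangle, Iso.refl_hom]
      rw [CategoryTheory.Functor.map_id, Category.comp_id, ← Preadditive.zsmul_comp]
      congr 1
      apply limit.hom_ext
      intro j
      simp [Limits.Pi.map, Preadditive.zsmul_comp, Preadditive.comp_zsmul]
  have b := Module.Free.chooseBasis R X.obj
  have iso1 : X ≅ FGFree.piObj ι (FGFree.R R) := FGFree.isoOfLinearEquiv b.equivFun
  have iso2 : (∏ᶜ (fun _ : ι => FGFree.R R)) ≅ FGFree.piObj ι (FGFree.R R) :=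
    limit.isoLimitCone ⟨_, FGFree.piFanIsLimit ι (FGFree.R R)⟩
  exact hQ.of_iso (iso2 ≪≫ iso1.symm)

end FG

/-- Suppose `R` is a commutative local ring with `m = (2) ≠ 0`, `m² = 0`, and the category
`F(R)` of finitely generated free `R`-modules carries a triangulated structure whose
translation functor is (isomorphic to) the identity and in which `R →2 R →2 R →2 R` is an
exact triangle.  Then every exact functor from `F(R)` to a topological triangulated
category `D` (one in which every object has a Hopf map, e.g. the stable homotopy category)
is trivial, and so is every exact functor from `D` to `F(R)`. -/
theorem stmt_17 (R : Type*) [CommRing R] [IsLocalRing R]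
    (hm : IsLocalRing.maximalIdeal R = Ideal.span {(2 : R)})
    (hne : IsLocalRing.maximalIdeal R ≠ ⊥)
    (hsq : IsLocalRing.maximalIdeal R ^ 2 = ⊥)
    [HasZeroObject (FGFree R)] [HasShift (FGFree R) ℤ]
    [∀ n : ℤ, (shiftFunctor (FGFree R) n).Additive] [Pretriangulated (FGFree R)]
    [IsTriangulated (FGFree R)]
    (e : shiftFunctor (FGFree R) (1 : ℤ) ≅ 𝟭 (FGFree R))
    (hR : Triangle.mk ((2 : ℤ) • 𝟙 (FGFree.R R)) ((2 : ℤ) • 𝟙 (FGFree.R R))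
        (((2 : ℤ) • 𝟙 (FGFree.R R)) ≫ e.inv.app (FGFree.R R)) ∈ distTriang (FGFree R))
    (D : Type*) [Category D] [Preadditive D] [HasZeroObject D] [HasShift D ℤ]
    [∀ n : ℤ, (shiftFunctor D n).Additive] [Pretriangulated D] [IsTriangulated D]
    (hD : ∀ Y : D, ∃ η : Y⟦(1 : ℤ)⟧ ⟶ Y, IsHopfMap Y η) :
    (∀ (F : FGFree R ⥤ D) [F.CommShift ℤ] [F.IsTriangulated],
      ∀ X : FGFree R, IsZero (F.obj X)) ∧
    (∀ (G : D ⥤ FGFree R) [G.CommShift ℤ] [G.IsTriangulated],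
      ∀ Y : D, IsZero (G.obj Y)) := by
  have hexotic := FGFree.isExotic_all e hR
  constructor
  · intro F _ _ X
    obtain ⟨η, hη⟩ := hD (F.obj X)
    exact isZero_of_exotic_of_hopf ((hexotic X).map F) η hη
  · intro G _ _ Y
    obtain ⟨η, hη⟩ := hD Y
    exact isZero_of_exotic_of_hopf (hexotic (G.obj Y)) _ (hη.map G)
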